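/- Let (ψ_i)_{i ∈ Fin d} and (φ_j)_{j ∈ Fin d} be two orthonormal bases of ℂ^d (d ≥ 2). If there exist indices i₀, j₀ with ⟨ψ_{i₀}, φ_{j₀}⟩ = 0, then the binary projective measurements {P_{ψ_{i₀}}, I − P_{ψ_{i₀}}} and {P_{φ_{j₀}}, I − P_{φ_{j₀}}} obtained by coarse-graining all outcomes other than i₀ (respectively j₀) are jointly measurable. Consequently, the condition ⟨ψ_i, φ_j⟩ ≠ 0 for all i, j is necessary for the two rank-one projective measurements to remain incompatible under all nontrivial coarse-grainings. -/

import Mathlib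

open Matrix Finset
open scoped ComplexOrder

noncomputable section

/-- A `d`-outcome POVM on `ℂ^n`: positive semidefinite effects summing to the identity. -/
def IsPOVM {n d : ℕ} (M : Fin d → Matrix (Fin n) (Fin n) ℂ) : Prop :=
  (∀ z, (M z).PosSemidef) ∧ ∑ z, M z = 1

/-- Coarse-graining of a `d`-outcome POVM along `f : Fin d → Fin k`. -/
def coarseGrain {n d k : ℕ} (M : Fin d → Matrix (Fin n) (Fin n) ℂ) (f : Fin d → Fin k)
    (z' : Fin k) : Matrix (Fin n) (Fin n) ℂ :=
  ∑ z ∈ Finset.univ.filter (fun z => f z = z'), M z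

/-- Compatibility of a finite family of `d`-outcome POVMs: existence of a parent POVM
`G` together with classical post-processings `p`. -/
def Compatible {n m d : ℕ} (M : Fin m → Fin d → Matrix (Fin n) (Fin n) ℂ) : Prop :=
  ∃ (L : ℕ) (G : Fin L → Matrix (Fin n) (Fin n) ℂ) (p : Fin m → Fin d → Fin L → ℝ),
    (∀ l, (G l).PosSemidef) ∧ (∑ l, G l = 1) ∧
    (∀ x z l, 0 ≤ p x z l) ∧ (∀ x l, ∑ z, p x z l = 1) ∧
    (∀ x z, M x z = ∑ l, (p x z l : ℂ) • G l)

/-- Joint measurability of two POVMs via a joint parent POVM with marginals `A` and `B`. -/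
def JointlyMeasurable {n a b : ℕ} (A : Fin a → Matrix (Fin n) (Fin n) ℂ)
    (B : Fin b → Matrix (Fin n) (Fin n) ℂ) : Prop :=
  ∃ G : Fin a → Fin b → Matrix (Fin n) (Fin n) ℂ,
    (∀ i j, (G i j).PosSemidef) ∧ (∑ i, ∑ j, G i j = 1) ∧
    (∀ i, A i = ∑ j, G i j) ∧ (∀ j, B j = ∑ i, G i j)


lemma aux_vecMulVec_mulVec {d : ℕ} (v x : Fin d → ℂ) :
    vecMulVec v (star v) *ᵥ x = (star v ⬝ᵥ x) • v := by
  funext a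
  simp [mulVec, vecMulVec_apply, dotProduct, Finset.mul_sum, mul_comm, mul_left_comm]

lemma aux_vecMulVec_herm {d : ℕ} (v : Fin d → ℂ) :
    (vecMulVec v (star v)).IsHermitian := by
  ext a b
  simp [conjTranspose_apply, vecMulVec_apply, mul_comm]

lemma aux_vecMulVec_psd {d : ℕ} (v : Fin d → ℂ) :
    (vecMulVec v (star v)).PosSemidef := by
  refine Matrix.PosSemidef.of_dotProduct_mulVec_nonneg (aux_vecMulVec_herm v) fun x => ?_
  rw [aux_vecMulVec_mulVec, dotProduct_smul, smul_eq_mul, star_dotProduct]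
  simpa [mul_comm] using mul_star_self_nonneg (star x ⬝ᵥ v)

lemma aux_dot_self_nonneg {d : ℕ} (y : Fin d → ℂ) : 0 ≤ star y ⬝ᵥ y := by
  refine Finset.sum_nonneg fun a _ => ?_
  simpa using star_mul_self_nonneg (y a)

lemma aux_residual_psd {d : ℕ} (u v : Fin d → ℂ)
    (huu : star u ⬝ᵥ u = 1) (hvv : star v ⬝ᵥ v = 1)
    (huv : star u ⬝ᵥ v = 0) (hvu : star v ⬝ᵥ u = 0) :
    (1 - vecMulVec u (star u) - vecMulVec v (star v)).PosSemidef := by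
  refine Matrix.PosSemidef.of_dotProduct_mulVec_nonneg (((isHermitian_one).sub (aux_vecMulVec_herm u)).sub (aux_vecMulVec_herm v)) fun x => ?_
  set c : ℂ := star u ⬝ᵥ x with hc
  set c' : ℂ := star v ⬝ᵥ x with hc'
  set y : Fin d → ℂ := x - c • u - c' • v with hy
  have hxu : star x ⬝ᵥ u = star c := by rw [star_dotProduct]
  have hxv : star x ⬝ᵥ v = star c' := by rw [star_dotProduct]
  have key : star x ⬝ᵥ ((1 - vecMulVec u (star u) - vecMulVec v (star v)) *ᵥ x)
      = star y ⬝ᵥ y := by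
    simp only [hy, sub_mulVec, one_mulVec, aux_vecMulVec_mulVec, ← hc, ← hc',
      dotProduct_sub, dotProduct_smul, star_sub, star_smul, sub_dotProduct,
      smul_dotProduct, smul_eq_mul]
    rw [huu, hvv, huv, hvu, hxu, hxv]
    ring
  rw [key]
  exact aux_dot_self_nonneg y

lemma aux_complete {d : ℕ} (ψ : Fin d → Fin d → ℂ)
    (hψ : ∀ i i', star (ψ i) ⬝ᵥ ψ i' = if i = i' then 1 else 0) :
    ∑ i, vecMulVec (ψ i) (star (ψ i)) = 1 := by
  set U : Matrix (Fin d) (Fin d) ℂ := Matrix.of ψ with hU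
  have h1 : U * Uᴴ = 1 := by
    ext i i'
    have := hψ i' i
    simp only [dotProduct, Pi.star_apply] at this
    simp only [mul_apply, conjTranspose_apply, hU, of_apply, one_apply]
    rw [show (if i = i' then (1:ℂ) else 0) = if i' = i then 1 else 0 by simp [eq_comm], ← this]
    exact Finset.sum_congr rfl fun x _ => mul_comm _ _
  have h2 : Uᴴ * U = 1 := mul_eq_one_comm.mp h1
  ext a b
  have := congrArg (fun M => M b a) h2
  simp only [mul_apply, conjTranspose_apply, hU, of_apply, one_apply] at this
  simp only [Matrix.sum_apply, vecMulVec_apply, Pi.star_apply, one_apply]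
  rw [show (if a = b then (1:ℂ) else 0) = if b = a then 1 else 0 by simp [eq_comm], ← this]
  exact Finset.sum_congr rfl fun x _ => mul_comm _ _

lemma aux_trace_one {d : ℕ} (v : Fin d → ℂ) (h : star v ⬝ᵥ v = 1) :
    (vecMulVec v (star v)).trace = 1 := by
  simp only [trace, diag_apply, vecMulVec_apply, Pi.star_apply]
  simp only [dotProduct, Pi.star_apply] at h
  rw [← h]
  exact Finset.sum_congr rfl fun a _ => mul_comm _ _


/-- If two orthonormal bases of `ℂ^d` have a pair of orthogonal members `ψ i₀ ⊥ φ j₀`, then the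
binary projective measurements obtained by coarse-graining all outcomes other than `i₀`
(resp. `j₀`) are jointly measurable; consequently the two rank-one projective measurements are
not fully incompatible w.r.t. coarse-graining, i.e. nonvanishing of all overlaps is necessary. -/
theorem orthogonal_overlap_gives_compatible_coarse_graining
    {d : ℕ} (hd : 2 ≤ d) (ψ φ : Fin d → Fin d → ℂ)
    (hψ : ∀ i i', star (ψ i) ⬝ᵥ ψ i' = if i = i' then 1 else 0)
    (hφ : ∀ j j', star (φ j) ⬝ᵥ φ j' = if j = j' then 1 else 0)
    (i₀ j₀ : Fin d) (h0 : star (ψ i₀) ⬝ᵥ φ j₀ = 0) :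
    JointlyMeasurable
      ![vecMulVec (ψ i₀) (star (ψ i₀)), 1 - vecMulVec (ψ i₀) (star (ψ i₀))]
      ![vecMulVec (φ j₀) (star (φ j₀)), 1 - vecMulVec (φ j₀) (star (φ j₀))] ∧
    ¬ (∀ a b : ℕ, 2 ≤ a → 2 ≤ b →
        ∀ (f : Fin d → Fin a) (g : Fin d → Fin b),
        (∀ z', coarseGrain (fun i => vecMulVec (ψ i) (star (ψ i))) f z' ≠ 1) →
        (∀ z', coarseGrain (fun j => vecMulVec (φ j) (star (φ j))) g z' ≠ 1) →
        ¬ JointlyMeasurable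
            (coarseGrain (fun i => vecMulVec (ψ i) (star (ψ i))) f)
            (coarseGrain (fun j => vecMulVec (φ j) (star (φ j))) g)) := by
  have huu := hψ i₀ i₀; rw [if_pos rfl] at huu
  have hvv := hφ j₀ j₀; rw [if_pos rfl] at hvv
  have h0' : star (φ j₀) ⬝ᵥ ψ i₀ = 0 := by
    rw [star_dotProduct, h0, star_zero]
  set P := vecMulVec (ψ i₀) (star (ψ i₀)) with hP
  set Q := vecMulVec (φ j₀) (star (φ j₀)) with hQ
  have hPpsd : P.PosSemidef := aux_vecMulVec_psd _
  have hQpsd : Q.PosSemidef := aux_vecMulVec_psd _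
  have hRpsd : (1 - P - Q).PosSemidef := aux_residual_psd _ _ huu hvv h0 h0'
  have hJM : JointlyMeasurable ![P, 1 - P] ![Q, 1 - Q] := by
    refine ⟨![![0, P], ![Q, 1 - P - Q]], ?_, ?_, ?_, ?_⟩
    · intro i j
      fin_cases i <;> fin_cases j
      · simpa using Matrix.PosSemidef.zero (n := Fin d) (R := ℂ)
      · simpa using hPpsd
      · simpa using hQpsd
      · simpa using hRpsd
    · simp [Fin.sum_univ_two]
    · intro i
      fin_cases i <;> simp [Fin.sum_univ_two]
    · intro j
      fin_cases j
      · simp [Fin.sum_univ_two]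
      · simp [Fin.sum_univ_two]
        abel
  constructor
  · exact hJM
  · intro H
    set f : Fin d → Fin 2 := fun z => if z = i₀ then 0 else 1 with hf
    set g : Fin d → Fin 2 := fun z => if z = j₀ then 0 else 1 with hg
    have hfilt : ∀ (i₀ : Fin d), Finset.univ.filter
        (fun z => (if z = i₀ then (0 : Fin 2) else 1) = 0) = {i₀} := by
      intro i₀; ext z
      by_cases h : z = i₀ <;> simp [h]
    have hfilt1 : ∀ (i₀ : Fin d), Finset.univ.filter
        (fun z => (if z = i₀ then (0 : Fin 2) else 1) = 1) = Finset.univ.erase i₀ := by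
      intro i₀; ext z
      by_cases h : z = i₀ <;> simp [h]
    have hcgψ : coarseGrain (fun i => vecMulVec (ψ i) (star (ψ i))) f = ![P, 1 - P] := by
      funext z'
      fin_cases z'
      · show coarseGrain _ f 0 = P
        rw [coarseGrain, hf]
        rw [hfilt i₀, Finset.sum_singleton]
      · show coarseGrain _ f 1 = 1 - P
        rw [coarseGrain, hf, hfilt1 i₀,
          Finset.sum_erase_eq_sub (Finset.mem_univ i₀), aux_complete ψ hψ]
    have hcgφ : coarseGrain (fun j => vecMulVec (φ j) (star (φ j))) g = ![Q, 1 - Q] := by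
      funext z'
      fin_cases z'
      · show coarseGrain _ g 0 = Q
        rw [coarseGrain, hg, hfilt j₀, Finset.sum_singleton]
      · show coarseGrain _ g 1 = 1 - Q
        rw [coarseGrain, hg, hfilt1 j₀,
          Finset.sum_erase_eq_sub (Finset.mem_univ j₀), aux_complete φ hφ]
    have hdne : ((d : ℂ)) ≠ 1 := by
      intro h
      have : (d : ℂ) = ((1 : ℕ) : ℂ) := by simpa using h
      have := Nat.cast_injective (R := ℂ) this
      omega
    have htrP : P.trace = 1 := aux_trace_one _ huu
    have htrQ : Q.trace = 1 := aux_trace_one _ hvv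
    have hPne1 : P ≠ 1 := by
      intro h
      have := congrArg Matrix.trace h
      rw [htrP, Matrix.trace_one] at this
      exact hdne (by simpa using this.symm)
    have hQne1 : Q ≠ 1 := by
      intro h
      have := congrArg Matrix.trace h
      rw [htrQ, Matrix.trace_one] at this
      exact hdne (by simpa using this.symm)
    have hPne0 : P ≠ 0 := by
      intro h; rw [h, Matrix.trace_zero] at htrP; exact one_ne_zero htrP.symm
    have hQne0 : Q ≠ 0 := by
      intro h; rw [h, Matrix.trace_zero] at htrQ; exact one_ne_zero htrQ.symm
    refine H 2 2 le_rfl le_rfl f g ?_ ?_ ?_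
    · intro z'
      rw [hcgψ]
      fin_cases z'
      · simpa using hPne1
      · intro h
        have h' : 1 - P = 1 := by simpa using h
        exact hPne0 (by rwa [sub_eq_self] at h')
    · intro z'
      rw [hcgφ]
      fin_cases z'
      · simpa using hQne1
      · intro h
        have h' : 1 - Q = 1 := by simpa using h
        exact hQne0 (by rwa [sub_eq_self] at h')
    · rw [hcgψ, hcgφ]
      exact hJM
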